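/- Let K₁, K₂, K₃, K₄ be positive reals with K₄ ≤ 1/k₆, and define λ̄₁(λ) = λ − 2λ₁ − k₂/K₁ − k₃/K₂ − 2k₁ − k₇² − k₈² and λ̄₂(λ) = −λ − 2λ₂ − (k₄ + k₅)/K₃ − k₆/K₄, where all k_i ≥ 0 and λ₁, λ₂ ∈ ℝ. If 2(λ₁ + λ₂) < −2k₁ − k₆² − k₇² − k₈², then there exist λ ∈ ℝ and positive K₁, K₂, K₃ and K₄ ∈ (0, 1/k₆] such that simultaneously λ̄₁(λ) > 0, λ̄₂(λ) > 0, and 1 − k₆K₄ > 0 (taking K₄ = 1/k₆ convention when k₆ = 0). -/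
import Mathlib


/-- Algebraic compatibility of the discounting rates: if
`2(λ₁ + λ₂) < −2k₁ − k₆² − k₇² − k₈²`, then one can choose `λ ∈ ℝ`,
`K₁, K₂, K₃ > 0` and `K₄ ∈ (0, 1/k₆]` such that
`λ̄₁(λ) = λ − 2λ₁ − k₂/K₁ − k₃/K₂ − 2k₁ − k₇² − k₈² > 0`,
`λ̄₂(λ) = −λ − 2λ₂ − (k₄ + k₅)/K₃ − k₆/K₄ > 0` and `1 − k₆K₄ > 0`. -/
theorem discounting_rate_compatibility
    (lam₁ lam₂ k₁ k₂ k₃ k₄ k₅ k₆ k₇ k₈ : ℝ)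
    (hk₁ : 0 ≤ k₁) (hk₂ : 0 ≤ k₂) (hk₃ : 0 ≤ k₃) (hk₄ : 0 ≤ k₄) (hk₅ : 0 ≤ k₅)
    (hk₆ : 0 < k₆) (hk₇ : 0 ≤ k₇) (hk₈ : 0 ≤ k₈)
    (hdiss : 2 * (lam₁ + lam₂) < -2 * k₁ - k₆ ^ 2 - k₇ ^ 2 - k₈ ^ 2) :
    ∃ (lam K₁ K₂ K₃ K₄ : ℝ), 0 < K₁ ∧ 0 < K₂ ∧ 0 < K₃ ∧ 0 < K₄ ∧ K₄ ≤ 1 / k₆ ∧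
      0 < lam - 2 * lam₁ - k₂ / K₁ - k₃ / K₂ - 2 * k₁ - k₇ ^ 2 - k₈ ^ 2 ∧
      0 < -lam - 2 * lam₂ - (k₄ + k₅) / K₃ - k₆ / K₄ ∧
      0 < 1 - k₆ * K₄ := by
  obtain ⟨δ, hδ, hδeq⟩ :
      ∃ δ : ℝ, 0 < δ ∧
        8 * δ = -2 * k₁ - k₆ ^ 2 - k₇ ^ 2 - k₈ ^ 2 - 2 * (lam₁ + lam₂) :=
    ⟨(-2 * k₁ - k₆ ^ 2 - k₇ ^ 2 - k₈ ^ 2 - 2 * (lam₁ + lam₂)) / 8,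
      by linarith, by ring⟩
  obtain ⟨K₁, hK₁, hb₁⟩ : ∃ K : ℝ, 0 < K ∧ k₂ / K ≤ δ := by
    refine ⟨(k₂ + 1) / δ, by positivity, ?_⟩
    rw [div_div_eq_mul_div, div_le_iff₀ (by positivity)]
    nlinarith
  obtain ⟨K₂, hK₂, hb₂⟩ : ∃ K : ℝ, 0 < K ∧ k₃ / K ≤ δ := by
    refine ⟨(k₃ + 1) / δ, by positivity, ?_⟩
    rw [div_div_eq_mul_div, div_le_iff₀ (by positivity)]
    nlinarith
  obtain ⟨K₃, hK₃, hb₃⟩ : ∃ K : ℝ, 0 < K ∧ (k₄ + k₅) / K ≤ δ := by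
    refine ⟨(k₄ + k₅ + 1) / δ, by positivity, ?_⟩
    rw [div_div_eq_mul_div, div_le_iff₀ (by positivity)]
    nlinarith
  obtain ⟨K₄, hK₄, hK₄le, hb₄, hlast⟩ :
      ∃ K : ℝ, 0 < K ∧ K ≤ 1 / k₆ ∧ k₆ / K ≤ k₆ ^ 2 + δ ∧ 0 < 1 - k₆ * K := by
    have hδ' : 0 < δ / (k₆ + 1) := by positivity
    refine ⟨1 / (k₆ + δ / (k₆ + 1)), by positivity,
      one_div_le_one_div_of_le hk₆ (by linarith), ?_, ?_⟩
    · rw [div_div_eq_mul_div, div_one]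
      have h : k₆ * (δ / (k₆ + 1)) ≤ δ := by
        rw [mul_div_assoc', div_le_iff₀ (by positivity)]
        nlinarith
      nlinarith
    · have h : k₆ * (1 / (k₆ + δ / (k₆ + 1))) < 1 := by
        rw [mul_one_div, div_lt_one (by linarith)]
        linarith
      linarith
  set A : ℝ := 2 * lam₁ + k₂ / K₁ + k₃ / K₂ + 2 * k₁ + k₇ ^ 2 + k₈ ^ 2 with hA
  set B : ℝ := -2 * lam₂ - (k₄ + k₅) / K₃ - k₆ / K₄ with hB
  have hAB : A < B := by
    simp only [hA, hB]
    linarith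
  exact ⟨(A + B) / 2, K₁, K₂, K₃, K₄, hK₁, hK₂, hK₃, hK₄, hK₄le,
    by simp only [hA, hB] at hAB ⊢; linarith,
    by simp only [hA, hB] at hAB ⊢; linarith, hlast⟩
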